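/- (Continuous relaxation upper bound) Suppose α i ≥ 0 for all i and let α = max_{i} α i. Let U* = max over all f : Fin n → ℝ with f i ≥ 0 and ∑_{i} f i ≤ 1 of ∑_{i} f i·(v i − α i·f i). Then for every selection sequence x, limsup_{T→∞} (1/T)·∑_{t=0}^{T−1} u (x t) t ≤ U* + α·r. -/

import Mathlib

/-- The memory of item `i` at time `t`, given decay rate `r` and selection sequence `x`. -/
def memory {n : ℕ} (r : ℝ) (x : ℕ → Fin n) (i : Fin n) : ℕ → ℝ
  | 0 => 0
  | t + 1 => (1 - r) * memory r x i t + r * (if x t = i then 1 else 0)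

section Aux
variable {n : ℕ} (r : ℝ) (x : ℕ → Fin n) (i : Fin n)

lemma memory_nonneg (hr0 : 0 ≤ r) (hr1 : r ≤ 1) : ∀ t, 0 ≤ memory r x i t
  | 0 => le_refl 0
  | t + 1 => by
      have h := memory_nonneg hr0 hr1 t
      have h2 : (0:ℝ) ≤ (if x t = i then (1:ℝ) else 0) := by positivity
      simp only [memory]
      nlinarith

lemma memory_le_one (hr0 : 0 ≤ r) (hr1 : r ≤ 1) : ∀ t, memory r x i t ≤ 1
  | 0 => zero_le_one
  | t + 1 => by
      have h := memory_le_one hr0 hr1 t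
      have h0 := memory_nonneg r x i hr0 hr1 t
      have h2 : (if x t = i then (1:ℝ) else 0) ≤ 1 := by split <;> norm_num
      have h2' : (0:ℝ) ≤ (if x t = i then (1:ℝ) else 0) := by positivity
      simp only [memory]
      nlinarith

lemma memory_sum : ∀ T : ℕ, memory r x i T =
    r * ((∑ t ∈ Finset.range T, if x t = i then (1:ℝ) else 0)
      - ∑ t ∈ Finset.range T, memory r x i t)
  | 0 => by simp [memory]
  | T + 1 => by
      have h := memory_sum T
      simp only [memory, Finset.sum_range_succ]
      ring_nf
      ring_nf at h
      linarith

lemma memory_sq_sum : ∀ T : ℕ, (memory r x i T)^2 =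
    2*r*(1-r)*(∑ t ∈ Finset.range T, if x t = i then memory r x i t else 0)
    + r^2 * (∑ t ∈ Finset.range T, if x t = i then (1:ℝ) else 0)
    - r*(2-r) * (∑ t ∈ Finset.range T, (memory r x i t)^2)
  | 0 => by simp [memory]
  | T + 1 => by
      have h := memory_sq_sum T
      simp only [memory, Finset.sum_range_succ]
      by_cases hx : x T = i <;> simp only [hx, if_true, if_false] <;> nlinarith [h]

private lemma aux_sq {a b c : ℝ} (ha : 0 ≤ a) (hb : 0 ≤ b) (hc : 0 ≤ c) (h : c - b ≤ a) :
    c^2 - 2*b*c ≤ a^2 := by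
  rcases le_or_gt c b with h' | h'
  · nlinarith [mul_nonneg hc (by linarith : (0:ℝ) ≤ 2*b - c)]
  · nlinarith [mul_le_mul h h (by linarith) ha]

/-- Lower bound on the selected-memory sum. -/
lemma A_lower_bound {T : ℕ} (hT : 1 ≤ T) (hr0 : 0 < r) (hr1 : r < 1) :
    let K := ∑ t ∈ Finset.range T, if x t = i then (1:ℝ) else 0
    K^2/(T:ℝ) - 2*K/(r*T) - r*K ≤
      ∑ t ∈ Finset.range T, if x t = i then memory r x i t else 0 := by
  intro K
  set M := memory r x i with hM
  set A := ∑ t ∈ Finset.range T, if x t = i then M t else 0 with hA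
  set S := ∑ t ∈ Finset.range T, M t with hS
  set Q := ∑ t ∈ Finset.range T, (M t)^2 with hQ
  have hT0 : (0:ℝ) < T := by exact_mod_cast hT
  have hm0 : ∀ t, 0 ≤ M t := memory_nonneg r x i hr0.le hr1.le
  have hm1 : ∀ t, M t ≤ 1 := memory_le_one r x i hr0.le hr1.le
  have h1 : (M T)^2 = 2*r*(1-r)*A + r^2*K - r*(2-r)*Q := memory_sq_sum r x i T
  have h2 : M T = r * (K - S) := memory_sum r x i T
  have hK0 : (0:ℝ) ≤ K := Finset.sum_nonneg fun t _ => by positivity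
  have hA0 : (0:ℝ) ≤ A := Finset.sum_nonneg fun t _ => by
    have := hm0 t; split <;> simp [*] <;> exact this
  have hS0 : (0:ℝ) ≤ S := Finset.sum_nonneg fun t _ => hm0 t
  have hQ0 : (0:ℝ) ≤ Q := Finset.sum_nonneg fun t _ => sq_nonneg _
  have hQS : Q ≤ S := Finset.sum_le_sum fun t _ => by nlinarith [hm0 t, hm1 t]
  have hSK : S ≤ K := by nlinarith [hm0 T, h2]
  have hQK : Q ≤ K := hQS.trans hSK
  have hKS : K - S = M T / r := by rw [h2]; field_simp
  have hS_ge : K - 1/r ≤ S := by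
    have h3 : M T / r ≤ 1 / r := by gcongr ?_ / r; exact hm1 T
    linarith [hKS ▸ h3]
  have hAQ : Q - r*K ≤ A := by
    nlinarith [mul_nonneg (mul_nonneg hr0.le hr0.le) hA0, mul_nonneg hr0.le hA0,
      mul_nonneg hr0.le (sub_nonneg.2 hQK), sq_nonneg (M T), mul_pos hr0 hT0]
  have hCS : S^2 ≤ (T:ℝ) * Q := by
    have := sq_sum_le_card_mul_sum_sq (s := Finset.range T) (f := fun t => M t)
    simpa using this
  have hSk2 : K^2 - 2*(1/r)*K ≤ S^2 := aux_sq hS0 (by positivity) hK0 hS_ge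
  have key : (K^2 - 2*(1/r)*K)/(T:ℝ) ≤ Q := by
    rw [div_le_iff₀ hT0]; nlinarith
  have e : K^2/(T:ℝ) - 2*K/(r*(T:ℝ)) = (K^2 - 2*(1/r)*K)/(T:ℝ) := by
    field_simp
  linarith [e ▸ key]

/-- Per-horizon average utility bound. -/
lemma avg_bound (hr0 : 0 < r) (hr1 : r < 1) (v α : Fin n → ℝ)
    (hα : ∀ i, 0 ≤ α i) (Ustar : ℝ)
    (hU : IsGreatest {U : ℝ | ∃ f : Fin n → ℝ, (∀ i, 0 ≤ f i) ∧
      (∑ i : Fin n, f i ≤ 1) ∧ U = ∑ i : Fin n, f i * (v i - α i * f i)} Ustar)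
    (B : ℝ) (hB : ∀ i, α i ≤ B) (hB0 : 0 ≤ B)
    {T : ℕ} (hT : 1 ≤ T) :
    (∑ t ∈ Finset.range T, (v (x t) - α (x t) * memory r x (x t) t)) / (T:ℝ)
      ≤ Ustar + B*r + 2*B/(r*T) := by
  have hT0 : (0:ℝ) < T := by exact_mod_cast hT
  set K : Fin n → ℝ := fun i => ∑ t ∈ Finset.range T, if x t = i then (1:ℝ) else 0 with hKdef
  set A : Fin n → ℝ := fun i => ∑ t ∈ Finset.range T, if x t = i then memory r x i t else 0
    with hAdef
  have hrw : ∑ t ∈ Finset.range T, (v (x t) - α (x t) * memory r x (x t) t)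
      = ∑ i : Fin n, (v i * K i - α i * A i) := by
    have h1 : ∀ t, v (x t) - α (x t) * memory r x (x t) t
        = ∑ i : Fin n, (if x t = i then v i - α i * memory r x i t else 0) := fun t => by
      rw [Finset.sum_ite_eq]; simp
    calc ∑ t ∈ Finset.range T, (v (x t) - α (x t) * memory r x (x t) t)
        = ∑ t ∈ Finset.range T, ∑ i : Fin n,
            (if x t = i then v i - α i * memory r x i t else 0) :=
          Finset.sum_congr rfl fun t _ => h1 t
      _ = ∑ i : Fin n, ∑ t ∈ Finset.range T,
            (if x t = i then v i - α i * memory r x i t else 0) := Finset.sum_comm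
      _ = _ := by
          refine Finset.sum_congr rfl fun i _ => ?_
          rw [hKdef, hAdef]
          simp only
          rw [Finset.mul_sum, Finset.mul_sum, ← Finset.sum_sub_distrib]
          refine Finset.sum_congr rfl fun t _ => ?_
          split <;> simp
  have hK0 : ∀ i, 0 ≤ K i := fun i => Finset.sum_nonneg fun t _ => by positivity
  have hKT : ∑ i : Fin n, K i = T := by
    rw [hKdef]
    simp only
    rw [Finset.sum_comm]
    have h1 : ∀ t, (∑ i : Fin n, if x t = i then (1:ℝ) else 0) = 1 := fun t => by
      rw [Finset.sum_ite_eq]; simp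
    simp [h1]
  have hAi : ∀ i, K i^2/(T:ℝ) - 2*K i/(r*T) - r*K i ≤ A i := fun i =>
    A_lower_bound r x i hT hr0 hr1
  have hfeas : ∑ i : Fin n, (K i / T) * (v i - α i * (K i / T)) ≤ Ustar := by
    refine hU.2 ⟨fun i => K i / T, fun i => by have := hK0 i; positivity, ?_, rfl⟩
    rw [← Finset.sum_div, hKT, div_self hT0.ne']
  have step1 : ∑ i : Fin n, (v i * K i - α i * A i)
      ≤ ∑ i : Fin n, (v i * K i - α i * (K i^2/(T:ℝ) - 2*K i/(r*T) - r*K i)) :=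
    Finset.sum_le_sum fun i _ => by nlinarith [hAi i, hα i]
  have step2 : ∑ i : Fin n, (v i * K i - α i * (K i^2/(T:ℝ) - 2*K i/(r*T) - r*K i))
      = (T:ℝ) * (∑ i : Fin n, (K i / T) * (v i - α i * (K i / T)))
        + ∑ i : Fin n, (α i * K i) * (2/(r*T) + r) := by
    rw [Finset.mul_sum, ← Finset.sum_add_distrib]
    refine Finset.sum_congr rfl fun i _ => ?_
    field_simp
    ring
  have step3 : ∑ i : Fin n, (α i * K i) * (2/(r*T) + r) ≤ (B * T) * (2/(r*T) + r) := by
    have hc : (0:ℝ) ≤ 2/(r*T) + r := by positivity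
    rw [← Finset.sum_mul]
    refine mul_le_mul_of_nonneg_right ?_ hc
    calc ∑ i : Fin n, α i * K i ≤ ∑ i : Fin n, B * K i :=
          Finset.sum_le_sum fun i _ => mul_le_mul_of_nonneg_right (hB i) (hK0 i)
      _ = B * T := by rw [← Finset.mul_sum, hKT]
  rw [hrw, div_le_iff₀ hT0]
  have hfin : (T:ℝ) * (∑ i : Fin n, (K i / T) * (v i - α i * (K i / T))) ≤ T * Ustar :=
    mul_le_mul_of_nonneg_left hfeas hT0.le
  have heq : (T:ℝ) * Ustar + (B * T) * (2/(r*T) + r) = (Ustar + B*r + 2*B/(r*T)) * T := by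
    field_simp
    ring
  linarith [step1, step2, step3]

end Aux

set_option maxHeartbeats 1000000 in
/-- (Continuous relaxation upper bound) Let `U*` be the maximum of
`∑ i, f i·(v i − α i·f i)` over all `f ≥ 0` with `∑ i, f i ≤ 1`, and let `α = max_i α i`.
Then every selection sequence has long-run average utility (limsup) at most `U* + α·r`. -/
theorem continuous_relaxation_upper_bound (n : ℕ) (hn : 1 ≤ n) (r : ℝ)
    (hr0 : 0 < r) (hr1 : r < 1) (v α : Fin n → ℝ) (hα : ∀ i, 0 ≤ α i)
    (Ustar : ℝ)
    (hU : IsGreatest {U : ℝ | ∃ f : Fin n → ℝ, (∀ i, 0 ≤ f i) ∧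
      (∑ i : Fin n, f i ≤ 1) ∧ U = ∑ i : Fin n, f i * (v i - α i * f i)} Ustar)
    (x : ℕ → Fin n) :
    Filter.limsup
      (fun T : ℕ =>
        (∑ t ∈ Finset.range T, (v (x t) - α (x t) * memory r x (x t) t)) / (T : ℝ))
      Filter.atTop
      ≤ Ustar + (Finset.univ.sup' ⟨⟨0, hn⟩, Finset.mem_univ _⟩ α) * r := by
  set B : ℝ := Finset.univ.sup' ⟨⟨0, hn⟩, Finset.mem_univ _⟩ α with hBdef
  have hB : ∀ i, α i ≤ B := fun i => Finset.le_sup' α (Finset.mem_univ i)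
  have hB0 : 0 ≤ B := (hα ⟨0, hn⟩).trans (hB ⟨0, hn⟩)
  set u : ℕ → ℝ := fun T =>
    (∑ t ∈ Finset.range T, (v (x t) - α (x t) * memory r x (x t) t)) / (T : ℝ) with hu
  set g : ℕ → ℝ := fun T => Ustar + B*r + 2*B/(r*T) with hg
  have hgl : Filter.Tendsto g Filter.atTop (nhds (Ustar + B*r)) := by
    have h0 : Filter.Tendsto (fun T : ℕ => 2*B/(r*(T:ℝ))) Filter.atTop (nhds 0) := by
      have he : (fun T : ℕ => 2*B/(r*(T:ℝ))) = fun T : ℕ => (2*B/r) * ((T:ℝ))⁻¹ := by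
        funext T; rw [div_mul_eq_div_div, div_eq_mul_inv]
      rw [he]
      have := (tendsto_inv_atTop_zero.comp tendsto_natCast_atTop_atTop).const_mul (2*B/r)
      simpa using this
    simpa using (tendsto_const_nhds.add h0 :
      Filter.Tendsto (fun T : ℕ => (Ustar + B*r) + 2*B/(r*(T:ℝ))) Filter.atTop _)
  have hev : ∀ᶠ T in Filter.atTop, u T ≤ g T := by
    filter_upwards [Filter.eventually_ge_atTop 1] with T hT
    exact avg_bound r x hr0 hr1 v α hα Ustar hU B hB hB0 hT
  have hev2 : ∀ᶠ T in Filter.atTop, u T ≤ Ustar + B*r + 2*B/r := by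
    filter_upwards [hev, Filter.eventually_ge_atTop 1] with T hT1 hT2
    have hT0 : (1:ℝ) ≤ T := by exact_mod_cast hT2
    have : 2*B/(r*(T:ℝ)) ≤ 2*B/r := by
      apply div_le_div_of_nonneg_left (by positivity) hr0
      nlinarith
    calc u T ≤ g T := hT1
      _ ≤ _ := by rw [hg]; simp only; linarith
  have hlo : ∀ᶠ T in Filter.atTop,
      (Finset.univ.inf' ⟨⟨0, hn⟩, Finset.mem_univ _⟩ (fun i => v i - α i)) ≤ u T := by
    filter_upwards [Filter.eventually_ge_atTop 1] with T hT
    set C : ℝ := Finset.univ.inf' ⟨⟨0, hn⟩, Finset.mem_univ _⟩ (fun i => v i - α i) with hC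
    have hT0 : (0:ℝ) < T := by exact_mod_cast hT
    rw [hu]
    simp only
    rw [le_div_iff₀ hT0]
    have : ∀ t ∈ Finset.range T, C ≤ v (x t) - α (x t) * memory r x (x t) t := by
      intro t _
      have h1 : C ≤ v (x t) - α (x t) := Finset.inf'_le _ (Finset.mem_univ _)
      have h2 : α (x t) * memory r x (x t) t ≤ α (x t) :=
        mul_le_of_le_one_right (hα _) (memory_le_one r x _ hr0.le hr1.le t)
      linarith
    calc C * T = ∑ _t ∈ Finset.range T, C := by
          rw [Finset.sum_const, Finset.card_range, nsmul_eq_mul, mul_comm]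
      _ ≤ _ := Finset.sum_le_sum this
  calc Filter.limsup u Filter.atTop ≤ Filter.limsup g Filter.atTop :=
        Filter.limsup_le_limsup hev
          (Filter.isCoboundedUnder_le_of_eventually_le _ hlo)
          hgl.isBoundedUnder_le
    _ = Ustar + B*r := hgl.limsup_eq
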